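/- For every integer n ≥ 1 and every complex number s with Re s > 0, the improper integral ∫_0^∞ t^{-n} · ( e^{-st} - P_n(s,t) · e^{-t} ) dt converges and equals (-1)^n · ( s^{n-1}/(n-1)! · Log s + B_n(s) ), where Log denotes the principal branch of the complex logarithm. -/

import Mathlib

open Finset Polynomial MeasureTheory

/-- The polynomials `B n ∈ ℚ[X]`: `B 1 = 0` and, for `n ≥ 1`,
`B (n+1) (s) = -(1/n!) ∑_{k=1}^n binom(n,k) (H_n - H_{n-k}) (s-1)^k`. -/
noncomputable def B : ℕ → Polynomial ℚ
  | 0 => 0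
  | n + 1 =>
      Polynomial.C (-(n.factorial : ℚ)⁻¹) *
        ∑ k ∈ Finset.Icc 1 n,
          Polynomial.C ((n.choose k : ℚ) * (harmonic n - harmonic (n - k))) *
            (Polynomial.X - 1) ^ k

open Set Filter Topology

lemma exp_taylor (w : ℂ) : ∀ n : ℕ, Complex.exp w =
    (∑ k ∈ Finset.range (n+1), w ^ k / (k.factorial : ℂ)) +
      w ^ (n+1) / (n.factorial : ℂ) * ∫ u in (0:ℝ)..1, (1 - (u:ℂ)) ^ n * Complex.exp (w * u) := by
  intro n
  induction n with
  | zero =>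
    have h : ∀ u ∈ Set.uIcc (0:ℝ) 1, HasDerivAt (fun x : ℝ => Complex.exp (w * x))
        (w * Complex.exp (w * u)) u := by
      intro u _
      have : HasDerivAt (fun y : ℂ => Complex.exp (w * y)) (w * Complex.exp (w * u)) (u : ℂ) := by
        simpa [mul_comm] using (((hasDerivAt_id (u:ℂ)).const_mul w).cexp)
      exact this.comp_ofReal
    have hint : IntervalIntegrable (fun u : ℝ => w * Complex.exp (w * u)) volume 0 1 := by
      apply Continuous.intervalIntegrable; fun_prop
    have h2 := intervalIntegral.integral_eq_sub_of_hasDerivAt h hint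
    rw [intervalIntegral.integral_const_mul] at h2
    simp only [Complex.ofReal_one, Complex.ofReal_zero, mul_one, mul_zero, Complex.exp_zero] at h2
    simp only [zero_add, Finset.sum_range_one, pow_zero, Nat.factorial_zero, Nat.cast_one,
      div_one, pow_one, one_mul]
    linear_combination -h2
  | succ n ih =>
    have h : ∀ u ∈ Set.uIcc (0:ℝ) 1, HasDerivAt
        (fun x : ℝ => -(1 - (x:ℂ))^(n+1) * Complex.exp (w * x))
        (((n:ℂ)+1) * (1 - (u:ℂ))^n * Complex.exp (w * u)
          - (1 - (u:ℂ))^(n+1) * (w * Complex.exp (w * u))) u := by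
      intro u _
      have h1 : HasDerivAt (fun y : ℂ => -(1 - y)^(n+1) * Complex.exp (w * y))
          (((n:ℂ)+1) * (1 - (u:ℂ))^n * Complex.exp (w * u)
          - (1 - (u:ℂ))^(n+1) * (w * Complex.exp (w * u))) (u : ℂ) := by
        have ha : HasDerivAt (fun y : ℂ => -(1 - y)^(n+1)) (((n:ℂ)+1) * (1 - (u:ℂ))^n) (u:ℂ) := by
          have := (((hasDerivAt_id (u:ℂ)).const_sub 1).pow (n+1)).neg
          refine this.congr_deriv ?_
          simp only [id_eq]
          push_cast; ring
        have hb : HasDerivAt (fun y : ℂ => Complex.exp (w * y)) (w * Complex.exp (w * u)) (u:ℂ) := by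
          simpa [mul_comm] using (((hasDerivAt_id (u:ℂ)).const_mul w).cexp)
        have := ha.mul hb
        refine this.congr_deriv ?_
        ring
      exact h1.comp_ofReal
    have hint : IntervalIntegrable (fun u : ℝ => ((n:ℂ)+1) * (1 - (u:ℂ))^n * Complex.exp (w * u)
        - (1 - (u:ℂ))^(n+1) * (w * Complex.exp (w * u))) volume 0 1 := by
      apply Continuous.intervalIntegrable; fun_prop
    have h2 := intervalIntegral.integral_eq_sub_of_hasDerivAt h hint
    have hint1 : IntervalIntegrable (fun u : ℝ => (1 - (u:ℂ))^n * Complex.exp (w * u)) volume 0 1 := by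
      apply Continuous.intervalIntegrable; fun_prop
    have hint2 : IntervalIntegrable (fun u : ℝ => (1 - (u:ℂ))^(n+1) * Complex.exp (w * u)) volume 0 1 := by
      apply Continuous.intervalIntegrable; fun_prop
    have hsplit : ∫ u in (0:ℝ)..1, (((n:ℂ)+1) * (1 - (u:ℂ))^n * Complex.exp (w * u)
        - (1 - (u:ℂ))^(n+1) * (w * Complex.exp (w * u)))
        = ((n:ℂ)+1) * (∫ u in (0:ℝ)..1, (1 - (u:ℂ))^n * Complex.exp (w * u))
          - w * (∫ u in (0:ℝ)..1, (1 - (u:ℂ))^(n+1) * Complex.exp (w * u)) := by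
      rw [← intervalIntegral.integral_const_mul, ← intervalIntegral.integral_const_mul,
        ← intervalIntegral.integral_sub ((hint1.const_mul _)) ((hint2.const_mul _))]
      apply intervalIntegral.integral_congr; intro u _; dsimp; ring
    rw [hsplit] at h2
    simp only [Complex.ofReal_one, Complex.ofReal_zero, sub_self, mul_zero, mul_one,
      Complex.exp_zero, zero_pow, Nat.succ_ne_zero, ne_eq, not_false_iff] at h2
    -- h2 : (n+1) * I_n - w * I_{n+1} = 0 - (-(1-0)^(n+1) * 1)
    norm_num at h2
    set I1 := ∫ u in (0:ℝ)..1, (1 - (u:ℂ))^n * Complex.exp (w * u) with hI1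
    set I2 := ∫ u in (0:ℝ)..1, (1 - (u:ℂ))^(n+1) * Complex.exp (w * u) with hI2
    rw [Finset.sum_range_succ]
    rw [ih]
    have hfac : ((n+1).factorial : ℂ) = ((n:ℂ)+1) * (n.factorial : ℂ) := by
      push_cast [Nat.factorial_succ]; ring
    have hne1 : ((n:ℂ)+1) ≠ 0 := Nat.cast_add_one_ne_zero n
    have hne2 : ((n.factorial : ℂ)) ≠ 0 := by exact_mod_cast Nat.cast_ne_zero.2 n.factorial_ne_zero
    rw [hfac]
    field_simp
    linear_combination (w^(n+1)) * h2

lemma cexp_integrableOn {a : ℂ} (ha : a.re < 0) :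
    IntegrableOn (fun t : ℝ => Complex.exp (a * t)) (Set.Ioi 0) := by
  have hb : (0:ℝ) < -a.re := by linarith
  refine (exp_neg_integrableOn_Ioi 0 hb).mono' ?_ ?_
  · exact (Complex.continuous_exp.comp (continuous_const.mul Complex.continuous_ofReal)).aestronglyMeasurable
  · filter_upwards with t
    rw [Complex.norm_exp]
    simp [neg_mul, Complex.mul_re]

lemma cexp_integral_Ioi {a : ℂ} (ha : a.re < 0) :
    ∫ t in Set.Ioi (0:ℝ), Complex.exp (a * t) = -a⁻¹ := by
  have ha0 : a ≠ 0 := fun h => by simp [h] at ha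
  have hderiv : ∀ x ∈ Set.Ioi (0:ℝ), HasDerivAt (fun t : ℝ => a⁻¹ * Complex.exp (a * t))
      (Complex.exp (a * x)) x := by
    intro x _
    have : HasDerivAt (fun y : ℂ => a⁻¹ * Complex.exp (a * y)) (Complex.exp (a * x)) (x:ℂ) := by
      have h1 : HasDerivAt (fun y : ℂ => Complex.exp (a * y)) (a * Complex.exp (a * x)) (x:ℂ) := by
        simpa [mul_comm] using (((hasDerivAt_id (x:ℂ)).const_mul a).cexp)
      have := h1.const_mul a⁻¹
      refine this.congr_deriv ?_
      rw [← mul_assoc, inv_mul_cancel₀ ha0, one_mul]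
    exact this.comp_ofReal
  have hcont : ContinuousWithinAt (fun t : ℝ => a⁻¹ * Complex.exp (a * t)) (Set.Ici 0) 0 := by
    apply Continuous.continuousWithinAt
    exact continuous_const.mul (Complex.continuous_exp.comp (continuous_const.mul Complex.continuous_ofReal))
  have htend : Tendsto (fun t : ℝ => a⁻¹ * Complex.exp (a * t)) atTop (𝓝 0) := by
    rw [tendsto_zero_iff_norm_tendsto_zero]
    have : (fun t : ℝ => ‖a⁻¹ * Complex.exp (a * t)‖) = fun t : ℝ => ‖a⁻¹‖ * Real.exp (a.re * t) := by
      funext t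
      rw [norm_mul]
      congr 1
      rw [Complex.norm_exp]
      congr 1
      simp [Complex.mul_re]
    rw [this]
    rw [show (0:ℝ) = ‖a⁻¹‖ * 0 by ring]
    apply Tendsto.const_mul
    apply Real.tendsto_exp_atBot.comp
    exact Tendsto.const_mul_atTop_of_neg ha tendsto_id
  have := integral_Ioi_of_hasDerivAt_of_tendsto hcont hderiv (cexp_integrableOn ha) htend
  rw [this]
  simp

lemma choose_aux (m k r : ℕ) (hm : m = k + r) :
    (r+1) * ((m+1).choose k) = (m+1) * (m.choose k) := by
  subst hm
  have h1 : (k + r).choose k = (k + r).choose r := by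
    have := Nat.choose_symm (Nat.le_add_right k r)
    simpa using this.symm
  have h2 : (k + r + 1).choose k = (k + r + 1).choose (r + 1) := by
    have := Nat.choose_symm (n := k + r + 1) (k := k) (by omega)
    have h3 : k + r + 1 - k = r + 1 := by omega
    rw [h3] at this
    exact this.symm
  have h4 := Nat.add_one_mul_choose_eq (k + r) r
  rw [h2, h1]
  calc (r+1) * (k+r+1).choose (r+1) = (k+r+1).choose (r+1) * (r+1) := Nat.mul_comm _ _
    _ = Nat.succ (k+r) * (k+r).choose r := h4.symm
    _ = (k+r+1) * (k+r).choose r := rfl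

lemma c_succ (m k : ℕ) (h1 : 1 ≤ k) (h2 : k ≤ m) :
    (((m+1).choose k : ℚ)) * (harmonic (m+1) - harmonic (m+1-k)) =
    ((m.choose k : ℚ)) * (harmonic m - harmonic (m-k))
      + ((m.choose (k-1) : ℚ)) * (harmonic m - harmonic (m-(k-1))) := by
  obtain ⟨k', rfl⟩ : ∃ k', k = k' + 1 := ⟨k-1, by omega⟩
  set r := m - (k'+1) with hr
  have hm : m = (k'+1) + r := by omega
  have e1 : m + 1 - (k'+1) = r + 1 := by omega
  have e2 : m - (k'+1) = r := by omega
  have e3 : m - (k'+1-1) = r + 1 := by omega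
  have e4 : k' + 1 - 1 = k' := by omega
  rw [e1, e3, e4]
  have hnat := choose_aux m (k'+1) r hm
  have hpas : (m+1).choose (k'+1) = m.choose k' + m.choose (k'+1) := Nat.choose_succ_succ m k'
  have hharm1 : harmonic (m+1) = harmonic m + ((m:ℚ)+1)⁻¹ := by
    rw [harmonic_succ]; push_cast; ring
  have hharm2 : harmonic (r+1) = harmonic r + ((r:ℚ)+1)⁻¹ := by
    rw [harmonic_succ]; push_cast; ring
  have hnatQ : ((r:ℚ)+1) * (((m+1).choose (k'+1) : ℚ)) = ((m:ℚ)+1) * ((m.choose (k'+1) : ℚ)) := by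
    exact_mod_cast congrArg (fun x : ℕ => (x : ℚ)) hnat
  have hpasQ : (((m+1).choose (k'+1) : ℚ)) = ((m.choose k' : ℚ)) + ((m.choose (k'+1) : ℚ)) := by
    exact_mod_cast congrArg (fun x : ℕ => (x : ℚ)) hpas
  have hm1 : ((m:ℚ)+1) ≠ 0 := by positivity
  have hr1 : ((r:ℚ)+1) ≠ 0 := by positivity
  rw [hharm1, hharm2]
  have key : (((m+1).choose (k'+1) : ℚ)) * ((m:ℚ)+1)⁻¹ = ((m.choose (k'+1) : ℚ)) * ((r:ℚ)+1)⁻¹ := by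
    field_simp
    linear_combination hnatQ
  linear_combination (harmonic m - harmonic r - ((r:ℚ)+1)⁻¹) * hpasQ + key

lemma key_sum (m : ℕ) (x : ℂ) :
    ∑ j ∈ Finset.range m, (x+1)^(m-1-j) * x^(j+1) / ((j:ℂ)+1) =
    ∑ k ∈ Finset.range m, (m.choose (k+1) : ℂ) *
      ((harmonic m : ℂ) - (harmonic (m-(k+1)) : ℂ)) * x^(k+1) := by
  induction m with
  | zero => simp
  | succ m ih =>
    have hm1 : ((m:ℂ)+1) ≠ 0 := Nat.cast_add_one_ne_zero m
    have hL : ∑ j ∈ Finset.range (m+1), (x+1)^(m+1-1-j) * x^(j+1) / ((j:ℂ)+1)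
        = (x+1) * (∑ j ∈ Finset.range m, (x+1)^(m-1-j) * x^(j+1) / ((j:ℂ)+1))
          + x^(m+1) / ((m:ℂ)+1) := by
      rw [Finset.sum_range_succ, Finset.mul_sum]
      congr 1
      · apply Finset.sum_congr rfl
        intro j hj
        have he : m + 1 - 1 - j = (m - 1 - j) + 1 := by
          simp only [Finset.mem_range] at hj; omega
        rw [he]; ring
      · simp
    have hcs : ∀ k ∈ Finset.range m,
        ((m+1).choose (k+1) : ℂ) * ((harmonic (m+1) : ℂ) - (harmonic (m+1-(k+1)) : ℂ)) * x^(k+1)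
        = ((m.choose (k+1) : ℂ) * ((harmonic m : ℂ) - (harmonic (m-(k+1)) : ℂ))
           + (m.choose k : ℂ) * ((harmonic m : ℂ) - (harmonic (m-k) : ℂ))) * x^(k+1) := by
      intro k hk
      simp only [Finset.mem_range] at hk
      have h := c_succ m (k+1) (by omega) (by omega)
      simp only [Nat.add_sub_cancel] at h
      have h' := congrArg (fun q : ℚ => (q : ℂ)) h
      push_cast at h'
      have e : m+1-(k+1) = m-k := by omega
      rw [e, h']
    have hsplit2 : ∑ k ∈ Finset.range (m+1), ((m+1).choose (k+1) : ℂ) *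
          ((harmonic (m+1) : ℂ) - (harmonic (m+1-(k+1)) : ℂ)) * x^(k+1)
        = (∑ k ∈ Finset.range m, (m.choose (k+1) : ℂ) *
            ((harmonic m : ℂ) - (harmonic (m-(k+1)) : ℂ)) * x^(k+1))
          + x * (∑ k ∈ Finset.range m, (m.choose k : ℂ) *
            ((harmonic m : ℂ) - (harmonic (m-k) : ℂ)) * x^k)
          + (harmonic (m+1) : ℂ) * x^(m+1) := by
      rw [Finset.sum_range_succ, Finset.sum_congr rfl hcs]
      simp only [add_mul]
      rw [Finset.sum_add_distrib, Finset.mul_sum]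
      congr 1
      · congr 1
        apply Finset.sum_congr rfl
        intro k _; ring
      · simp
    have hshift : ∑ k ∈ Finset.range m, (m.choose k : ℂ) *
          ((harmonic m : ℂ) - (harmonic (m-k) : ℂ)) * x^k
        = (∑ k ∈ Finset.range m, (m.choose (k+1) : ℂ) *
            ((harmonic m : ℂ) - (harmonic (m-(k+1)) : ℂ)) * x^(k+1))
          - (harmonic m : ℂ) * x^m := by
      have h1 := Finset.sum_range_succ (fun k => (m.choose k : ℂ) *
          ((harmonic m : ℂ) - (harmonic (m-k) : ℂ)) * x^k) m
      have h2 := Finset.sum_range_succ' (fun k => (m.choose k : ℂ) *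
          ((harmonic m : ℂ) - (harmonic (m-k) : ℂ)) * x^k) m
      rw [h2] at h1
      simp only [Nat.sub_self, harmonic_zero, Nat.choose_self, Nat.cast_one, Nat.choose_zero_right,
        Nat.sub_zero, pow_zero, mul_one, one_mul, Rat.cast_zero, sub_zero, sub_self, mul_zero,
        zero_mul, add_zero] at h1
      linear_combination -h1
    have hH : (harmonic (m+1) : ℂ) = (harmonic m : ℂ) + ((m:ℂ)+1)⁻¹ := by
      rw [harmonic_succ]; push_cast; ring
    rw [hL, ih, hsplit2, hshift, hH]
    field_simp
    ring

lemma u_re_pos {s : ℂ} (hs : 0 < s.re) {u : ℝ} (h0 : 0 ≤ u) (h1 : u ≤ 1) :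
    0 < (1 - (1-s)*(u:ℂ)).re := by
  have : (1 - (1-s)*(u:ℂ)).re = 1 - (1 - s.re)*u := by
    simp [Complex.sub_re, Complex.mul_re, Complex.ofReal_re, Complex.ofReal_im]
  rw [this]
  nlinarith [mul_nonneg h0 hs.le]

lemma u_ne_zero {s : ℂ} (hs : 0 < s.re) {u : ℝ} (h0 : 0 ≤ u) (h1 : u ≤ 1) :
    (1 - (1-s)*(u:ℂ)) ≠ 0 := by
  intro h
  have := u_re_pos hs h0 h1
  rw [h] at this
  simp at this

lemma u_integral (m : ℕ) (s : ℂ) (hs : 0 < s.re) :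
    ∫ u in (0:ℝ)..1, (1-s)^(m+1) * ((1 - (u:ℂ))^m * (1 - (1-s)*(u:ℂ))⁻¹)
    = (∑ j ∈ Finset.range m, (-s)^(m-1-j) * (1-s)^(j+1) / ((j:ℂ)+1))
      - (-s)^m * Complex.log s := by
  set A : ℝ → ℂ := fun u =>
    -(∑ j ∈ Finset.range m, (-s)^(m-1-j) * ((1-s)*(1-(u:ℂ)))^(j+1) / ((j:ℂ)+1))
      - (-s)^m * Complex.log (1 - (1-s)*(u:ℂ)) with hA
  have hderiv : ∀ u ∈ Set.uIcc (0:ℝ) 1,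
      HasDerivAt A ((1-s)^(m+1) * ((1 - (u:ℂ))^m * (1 - (1-s)*(u:ℂ))⁻¹)) u := by
    intro u hu
    rw [Set.uIcc_of_le (by norm_num : (0:ℝ) ≤ 1)] at hu
    obtain ⟨h0, h1⟩ := hu
    have hne := u_ne_zero hs h0 h1
    have hsum : HasDerivAt (fun y : ℂ =>
        ∑ j ∈ Finset.range m, (-s)^(m-1-j) * ((1-s)*(1-y))^(j+1) / ((j:ℂ)+1))
        (∑ j ∈ Finset.range m, -((-s)^(m-1-j) * ((1-s)*(1-(u:ℂ)))^j * (1-s))) (u:ℂ) := by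
      apply HasDerivAt.fun_sum
      intro j _
      have hw : HasDerivAt (fun y : ℂ => (1-s)*(1-y)) (-(1-s)) (u:ℂ) := by
        simpa using ((hasDerivAt_id (u:ℂ)).const_sub 1).const_mul (1-s)
      have h := ((hw.pow (j+1)).div_const ((j:ℂ)+1)).const_mul ((-s)^(m-1-j))
      have hj : ((j:ℂ)+1) ≠ 0 := Nat.cast_add_one_ne_zero j
      have e : j + 1 - 1 = j := rfl
      refine HasDerivAt.congr_deriv (HasDerivAt.congr_of_eventuallyEq h (Filter.Eventually.of_forall fun y => ?_)) ?_
      · dsimp only [Pi.pow_apply]; ring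
      · rw [e]
        push_cast
        field_simp
    have hlog : HasDerivAt (fun y : ℂ => Complex.log (1 - (1-s)*y))
        (-(1-s) / (1 - (1-s)*(u:ℂ))) (u:ℂ) := by
      have hw : HasDerivAt (fun y : ℂ => 1 - (1-s)*y) (-(1-s)) (u:ℂ) := by
        simpa using (((hasDerivAt_id (u:ℂ)).const_mul (1-s)).const_sub 1)
      exact hw.clog (Complex.mem_slitPlane_iff.mpr (Or.inl (u_re_pos hs h0 h1)))
    have hcomb := (hsum.neg).sub (hlog.const_mul ((-s)^m))
    have hgeom := geom_sum₂_mul ((1-s)*(1-(u:ℂ))) (-s) m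
    have hxD : (1-s)*(1-(u:ℂ)) - (-s) = 1 - (1-s)*(u:ℂ) := by ring
    rw [hxD] at hgeom
    have hD : HasDerivAt (fun y : ℂ =>
        -(∑ j ∈ Finset.range m, (-s)^(m-1-j) * ((1-s)*(1-y))^(j+1) / ((j:ℂ)+1))
          - (-s)^m * Complex.log (1 - (1-s)*y))
        ((1-s)^(m+1) * ((1 - (u:ℂ))^m * (1 - (1-s)*(u:ℂ))⁻¹)) (u:ℂ) := by
      refine hcomb.congr_deriv ?_
      rw [Finset.sum_neg_distrib]
      rw [neg_neg]
      have hms : ∑ j ∈ Finset.range m, (-s)^(m-1-j) * ((1-s)*(1-(u:ℂ)))^j * (1-s)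
          = (1-s) * ∑ j ∈ Finset.range m, ((1-s)*(1-(u:ℂ)))^j * (-s)^(m-1-j) := by
        rw [Finset.mul_sum]
        apply Finset.sum_congr rfl
        intro j _; ring
      rw [hms]
      have hS : ∑ j ∈ Finset.range m, ((1-s)*(1-(u:ℂ)))^j * (-s)^(m-1-j)
          = ((1-s)^m * (1-(u:ℂ))^m - (-s)^m) / (1 - (1-s)*(u:ℂ)) := by
        rw [eq_div_iff hne, ← mul_pow]
        exact hgeom
      rw [hS]
      field_simp
      ring
    exact hD.comp_ofReal
  have hint : IntervalIntegrable
      (fun u : ℝ => (1-s)^(m+1) * ((1 - (u:ℂ))^m * (1 - (1-s)*(u:ℂ))⁻¹)) volume 0 1 := by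
    apply ContinuousOn.intervalIntegrable
    apply ContinuousOn.mul continuousOn_const
    apply ContinuousOn.mul
    · exact (Continuous.continuousOn (by fun_prop))
    · apply ContinuousOn.inv₀
      · exact (Continuous.continuousOn (by fun_prop))
      · intro u hu
        rw [Set.uIcc_of_le (by norm_num : (0:ℝ) ≤ 1)] at hu
        exact u_ne_zero hs hu.1 hu.2
  have := intervalIntegral.integral_eq_sub_of_hasDerivAt hderiv hint
  rw [this, hA]
  simp
  ring

theorem statement1 (n : ℕ) (hn : 1 ≤ n) (s : ℂ) (hs : 0 < s.re) :
    IntegrableOn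
      (fun t : ℝ => ((t : ℂ) ^ n)⁻¹ *
        (Complex.exp (-s * t) -
          (∑ k ∈ Finset.range n, (1 - s) ^ k * (t : ℂ) ^ k / (k.factorial : ℂ)) *
            Complex.exp (-t))) (Set.Ioi 0) ∧
    ∫ t in Set.Ioi (0 : ℝ), ((t : ℂ) ^ n)⁻¹ *
        (Complex.exp (-s * t) -
          (∑ k ∈ Finset.range n, (1 - s) ^ k * (t : ℂ) ^ k / (k.factorial : ℂ)) *
            Complex.exp (-t)) =
      (-1) ^ n * (s ^ (n - 1) / (((n - 1).factorial : ℂ)) * Complex.log s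
        + Polynomial.aeval s (B n)) := by
  obtain ⟨m, rfl⟩ : ∃ m, n = m + 1 := ⟨n - 1, by omega⟩
  -- the two-variable kernel
  set F : ℝ → ℝ → ℂ := fun t u => (1 - (u:ℂ))^m * Complex.exp (((1-s)*u - 1)*t) with hF
  set c : ℝ := min s.re 1 with hc
  have hc0 : 0 < c := lt_min hs one_pos
  -- real part bound
  have hre : ∀ u : ℝ, 0 ≤ u → u ≤ 1 → ((1-s)*(u:ℂ) - 1).re ≤ -c := by
    intro u h0 h1
    have h2 : ((1-s)*(u:ℂ) - 1).re = (1 - s.re)*u - 1 := by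
      simp [Complex.sub_re, Complex.mul_re]
    rw [h2, hc]
    rcases le_total s.re 1 with h | h
    · have : min s.re 1 = s.re := min_eq_left h
      rw [this]; nlinarith
    · have : min s.re 1 = 1 := min_eq_right h
      rw [this]; nlinarith
  have hreneg : ∀ u : ℝ, 0 ≤ u → u ≤ 1 → ((1-s)*(u:ℂ) - 1).re < 0 := by
    intro u h0 h1
    calc ((1-s)*(u:ℂ) - 1).re ≤ -c := hre u h0 h1
    _ < 0 := by linarith
  -- norm bound
  have hbound : ∀ t u : ℝ, 0 ≤ t → 0 ≤ u → u ≤ 1 → ‖F t u‖ ≤ Real.exp (-c*t) := by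
    intro t u ht h0 h1
    rw [hF]
    dsimp only
    rw [norm_mul, norm_pow]
    have hb1 : ‖(1 : ℂ) - (u:ℂ)‖ ≤ 1 := by
      rw [show (1 : ℂ) - (u:ℂ) = ((1-u : ℝ) : ℂ) by push_cast; ring]
      rw [Complex.norm_real, Real.norm_eq_abs, abs_le]
      constructor <;> linarith
    have hb2 : ‖Complex.exp (((1-s)*(u:ℂ) - 1)*t)‖ = Real.exp ((((1-s)*(u:ℂ) - 1)).re * t) := by
      rw [Complex.norm_exp]
      congr 1
      simp [Complex.mul_re]
    calc ‖(1 : ℂ) - (u:ℂ)‖^m * ‖Complex.exp (((1-s)*(u:ℂ) - 1)*t)‖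
        ≤ 1^m * Real.exp ((((1-s)*(u:ℂ) - 1)).re * t) := by
          rw [hb2]
          apply mul_le_mul (pow_le_pow_left₀ (norm_nonneg _) hb1 m) le_rfl (Real.exp_nonneg _)
          norm_num
      _ ≤ Real.exp (-c*t) := by
          rw [one_pow, one_mul]
          apply Real.exp_le_exp.mpr
          have := hre u h0 h1
          nlinarith
  -- product integrability
  have hprodmeas : ((volume : Measure ℝ).restrict (Set.Ioi 0)).prod
      ((volume : Measure ℝ).restrict (Set.Ioc 0 1))
      = ((volume : Measure ℝ).prod (volume : Measure ℝ)).restrict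
          ((Set.Ioi 0) ×ˢ (Set.Ioc 0 1)) := Measure.prod_restrict _ _
  have hFmeas : Continuous (Function.uncurry F) := by
    rw [hF]
    apply Continuous.mul
    · fun_prop
    · apply Complex.continuous_exp.comp
      fun_prop
  have hFint : Integrable (Function.uncurry F)
      (((volume : Measure ℝ).restrict (Set.Ioi 0)).prod
        ((volume : Measure ℝ).restrict (Set.Ioc 0 1))) := by
    have hmaj : Integrable (fun p : ℝ × ℝ => Real.exp (-c * p.1))
        (((volume : Measure ℝ).restrict (Set.Ioi 0)).prod
          ((volume : Measure ℝ).restrict (Set.Ioc 0 1))) := by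
      have h1 : Integrable (fun t : ℝ => Real.exp (-c*t)) (volume.restrict (Set.Ioi 0)) :=
        exp_neg_integrableOn_Ioi 0 hc0
      have h2 : Integrable (fun _ : ℝ => (1:ℝ)) (volume.restrict (Set.Ioc 0 1)) :=
        integrable_const 1
      simpa using h1.mul_prod h2
    apply hmaj.mono' (hFmeas.aestronglyMeasurable)
    rw [hprodmeas]
    filter_upwards [ae_restrict_mem (measurableSet_Ioi.prod measurableSet_Ioc)] with p hp
    exact hbound p.1 p.2 (le_of_lt hp.1) (le_of_lt hp.2.1) hp.2.2
  -- pointwise identity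
  have hpt : ∀ t : ℝ, t ∈ Set.Ioi (0:ℝ) →
      ((t:ℂ)^(m+1))⁻¹ * (Complex.exp (-s*t) -
        (∑ k ∈ Finset.range (m+1), (1-s)^k * (t:ℂ)^k / (k.factorial:ℂ)) * Complex.exp (-(t:ℂ)))
      = (1-s)^(m+1)/(m.factorial:ℂ) * ∫ u in Set.Ioc (0:ℝ) 1, F t u := by
    intro t ht
    rw [Set.mem_Ioi] at ht
    have htne : (t:ℂ) ≠ 0 := Complex.ofReal_ne_zero.mpr (ne_of_gt ht)
    have h1 := exp_taylor ((1-s)*t) m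
    have h2 : Complex.exp (-s*t) = Complex.exp ((1-s)*t) * Complex.exp (-(t:ℂ)) := by
      rw [← Complex.exp_add]; congr 1; ring
    have hsum : (∑ k ∈ Finset.range (m+1), (1-s)^k * (t:ℂ)^k / (k.factorial:ℂ))
        = ∑ k ∈ Finset.range (m+1), ((1-s)*(t:ℂ))^k / (k.factorial:ℂ) := by
      apply Finset.sum_congr rfl
      intro k _
      rw [mul_pow]
    have h4 : Complex.exp (-(t:ℂ)) * ∫ u in (0:ℝ)..1, (1-(u:ℂ))^m * Complex.exp ((1-s)*t*u)
        = ∫ u in (0:ℝ)..1, F t u := by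
      rw [← intervalIntegral.integral_const_mul]
      apply intervalIntegral.integral_congr
      intro u _
      rw [hF]
      dsimp only
      rw [show ((1-s)*(u:ℂ) - 1)*(t:ℂ) = (1-s)*t*u + (-(t:ℂ)) by ring, Complex.exp_add]
      ring
    have h5 : ∫ u in Set.Ioc (0:ℝ) 1, F t u = ∫ u in (0:ℝ)..1, F t u :=
      (intervalIntegral.integral_of_le zero_le_one).symm
    rw [h2, hsum, h5, ← h4]
    have h6 : Complex.exp ((1-s)*(t:ℂ)) -
        (∑ k ∈ Finset.range (m+1), ((1-s)*(t:ℂ))^k / (k.factorial:ℂ))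
        = ((1-s)*(t:ℂ))^(m+1) / (m.factorial:ℂ)
          * ∫ u in (0:ℝ)..1, (1-(u:ℂ))^m * Complex.exp ((1-s)*t*u) := by
      linear_combination h1
    have hfne : ((m.factorial : ℂ)) ≠ 0 := Nat.cast_ne_zero.2 m.factorial_ne_zero
    have h7 : ((t:ℂ)^(m+1)) ≠ 0 := pow_ne_zero _ htne
    calc ((t:ℂ)^(m+1))⁻¹ * (Complex.exp ((1-s)*(t:ℂ)) * Complex.exp (-(t:ℂ)) -
          (∑ k ∈ Finset.range (m+1), ((1-s)*(t:ℂ))^k / (k.factorial:ℂ)) * Complex.exp (-(t:ℂ)))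
        = ((t:ℂ)^(m+1))⁻¹ * ((Complex.exp ((1-s)*(t:ℂ)) -
            (∑ k ∈ Finset.range (m+1), ((1-s)*(t:ℂ))^k / (k.factorial:ℂ))) * Complex.exp (-(t:ℂ))) := by
          ring
      _ = ((t:ℂ)^(m+1))⁻¹ * (((1-s)*(t:ℂ))^(m+1) / (m.factorial:ℂ)
            * (∫ u in (0:ℝ)..1, (1-(u:ℂ))^m * Complex.exp ((1-s)*t*u)) * Complex.exp (-(t:ℂ))) := by
          rw [h6]
      _ = (1-s)^(m+1)/(m.factorial:ℂ) * (Complex.exp (-(t:ℂ)) *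
            ∫ u in (0:ℝ)..1, (1-(u:ℂ))^m * Complex.exp ((1-s)*t*u)) := by
          rw [mul_pow]
          generalize (∫ u in (0:ℝ)..1, (1-(u:ℂ))^m * Complex.exp ((1-s)*t*u)) = I
          field_simp
  -- a.e. equality on Ioi 0
  have haeeq : (fun t : ℝ => ((t:ℂ)^(m+1))⁻¹ * (Complex.exp (-s*t) -
        (∑ k ∈ Finset.range (m+1), (1-s)^k * (t:ℂ)^k / (k.factorial:ℂ)) * Complex.exp (-(t:ℂ))))
      =ᵐ[volume.restrict (Set.Ioi 0)]
      (fun t : ℝ => (1-s)^(m+1)/(m.factorial:ℂ) * ∫ u in Set.Ioc (0:ℝ) 1, F t u) := by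
    filter_upwards [ae_restrict_mem measurableSet_Ioi] with t ht
    exact hpt t ht
  have hint1 : Integrable (fun t : ℝ => ∫ u in Set.Ioc (0:ℝ) 1, F t u)
      (volume.restrict (Set.Ioi 0)) := by
    have := hFint.integral_prod_left
    exact this
  constructor
  · exact ((hint1.const_mul _).congr haeeq.symm)
  · rw [integral_congr_ae haeeq]
    rw [MeasureTheory.integral_const_mul]
    have hswap : ∫ t in Set.Ioi (0:ℝ), ∫ u in Set.Ioc (0:ℝ) 1, F t u
        = ∫ u in Set.Ioc (0:ℝ) 1, ∫ t in Set.Ioi (0:ℝ), F t u :=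
      MeasureTheory.integral_integral_swap hFint
    rw [hswap]
    have hinner : ∀ u ∈ Set.Ioc (0:ℝ) 1, ∫ t in Set.Ioi (0:ℝ), F t u
        = (1-(u:ℂ))^m * (1 - (1-s)*(u:ℂ))⁻¹ := by
      intro u hu
      rw [hF]
      dsimp only
      rw [MeasureTheory.integral_const_mul, cexp_integral_Ioi (hreneg u hu.1.le hu.2)]
      congr 1
      rw [← inv_neg]
      congr 1
      ring
    rw [MeasureTheory.setIntegral_congr_fun measurableSet_Ioc hinner]
    have hIoc : ∫ u in Set.Ioc (0:ℝ) 1, (1-(u:ℂ))^m * (1 - (1-s)*(u:ℂ))⁻¹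
        = ∫ u in (0:ℝ)..1, (1-(u:ℂ))^m * (1 - (1-s)*(u:ℂ))⁻¹ :=
      (intervalIntegral.integral_of_le zero_le_one).symm
    rw [hIoc]
    have hu2 : (1-s)^(m+1) * ∫ u in (0:ℝ)..1, (1-(u:ℂ))^m * (1 - (1-s)*(u:ℂ))⁻¹
        = (∑ j ∈ Finset.range m, (-s)^(m-1-j) * (1-s)^(j+1) / ((j:ℂ)+1))
          - (-s)^m * Complex.log s := by
      rw [← u_integral m s hs, ← intervalIntegral.integral_const_mul]
    -- final algebra
    have hfne : ((m.factorial : ℂ)) ≠ 0 := Nat.cast_ne_zero.2 m.factorial_ne_zero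
    have haeval : (Polynomial.aeval s) (B (m+1))
        = -((m.factorial:ℂ))⁻¹ * ∑ k ∈ Finset.Icc 1 m,
            (m.choose k : ℂ) * ((harmonic m : ℂ) - (harmonic (m-k) : ℂ)) * (s-1)^k := by
      rw [show B (m+1) = Polynomial.C (-(m.factorial : ℚ)⁻¹) *
        ∑ k ∈ Finset.Icc 1 m,
          Polynomial.C ((m.choose k : ℚ) * (harmonic m - harmonic (m - k))) *
            (Polynomial.X - 1) ^ k from rfl]
      simp only [map_mul, map_sum, Polynomial.aeval_C, map_pow, map_sub, Polynomial.aeval_X,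
        map_one, eq_ratCast]
      push_cast
      ring
    have hIcc : ∑ k ∈ Finset.Icc 1 m,
          (m.choose k : ℂ) * ((harmonic m : ℂ) - (harmonic (m-k) : ℂ)) * (s-1)^k
        = ∑ k ∈ Finset.range m, (m.choose (k+1) : ℂ) *
            ((harmonic m : ℂ) - (harmonic (m-(k+1)) : ℂ)) * (s-1)^(k+1) := by
      rw [← Finset.Ico_add_one_right_eq_Icc, Finset.sum_Ico_eq_sum_range]
      try simp only [Nat.add_sub_cancel]
      apply Finset.sum_congr rfl
      intro k _
      have e : 1 + k = k + 1 := Nat.add_comm 1 k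
      rw [e]
    have hS : (∑ j ∈ Finset.range m, (-s)^(m-1-j) * (1-s)^(j+1) / ((j:ℂ)+1))
        = (-1)^m * ∑ j ∈ Finset.range m, ((s-1)+1)^(m-1-j) * (s-1)^(j+1) / ((j:ℂ)+1) := by
      rw [Finset.mul_sum]
      apply Finset.sum_congr rfl
      intro j hj
      rw [Finset.mem_range] at hj
      have h1 : (-s : ℂ) = (-1) * ((s-1)+1) := by ring
      have h2 : (1-s : ℂ) = (-1) * (s-1) := by ring
      rw [h1, h2, mul_pow, mul_pow]
      have h3 : (m-1-j) + (j+1) = m := by omega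
      have h4 : (-1:ℂ)^(m-1-j) * (-1:ℂ)^(j+1) = (-1:ℂ)^m := by rw [← pow_add, h3]
      rw [← h4]
      ring
    have hgl : (1-s)^(m+1)/(m.factorial:ℂ)
          * (∫ u in (0:ℝ)..1, (1-(u:ℂ))^m * (1 - (1-s)*(u:ℂ))⁻¹)
        = ((1-s)^(m+1) * ∫ u in (0:ℝ)..1, (1-(u:ℂ))^m * (1 - (1-s)*(u:ℂ))⁻¹)/(m.factorial:ℂ) := by
      ring
    rw [hgl, hu2, hS, key_sum m (s-1), haeval, hIcc]
    have hnegpow : (-s)^m = (-1:ℂ)^m * s^m := by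
      rw [neg_pow]
    rw [hnegpow]
    try simp only [Nat.add_sub_cancel]
    push_cast
    field_simp
    ring
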